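/- (Theorem 2, exhaustive recovery) Suppose f₀' < r < f₀, λ̄ < μ̄(r−f₀)/(−(r−f₀')), μ̄ < μ̂ where μ̂ is the unique stationary point of μ ↦ u₂'(λ̄, μ), and c₁ ≤ c₀(r−f₀')(f₀'−f₀)/(μ̄[λ̄(r−f₀')+μ̄(r−f₀)]). Then (λ̄, μ̄) is a Nash equilibrium: λ̄ maximizes u₁'(·, μ̄) over [0, λ̄] and μ̄ maximizes u₂'(λ̄, ·) over [0, μ̄]. -/

import Mathlib

/-- PDQ long-time average queue length (extended-real valued), with f' = ηf. -/
noncomputable def Xbar (r η lam mu f : ℝ) : EReal :=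
  if r ≤ η * f then (0 : EReal)
  else if r < (mu * f + lam * (η * f)) / (lam + mu) then
    (((lam / mu) * ((r - η * f) * (η * f - f)) / (lam * (r - η * f) + mu * (r - f)) : ℝ) : EReal)
  else ⊤

/-- Attacker's utility u₁'(λ, μ) = c₀X̄(λ, μ, f₀) − c₁λ. -/
noncomputable def u1' (c₀ c₁ r η f₀ : ℝ) (lam mu : ℝ) : EReal :=
  (c₀ : EReal) * Xbar r η lam mu f₀ - ((c₁ * lam : ℝ) : EReal)

/-- SO's utility u₂'(λ, μ) = −c₀X̄(λ, μ, f₀) − c₂'μ. -/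
noncomputable def u2' (c₀ c₂' r η f₀ : ℝ) (lam mu : ℝ) : EReal :=
  -((c₀ : EReal) * Xbar r η lam mu f₀) - ((c₂' * mu : ℝ) : EReal)

lemma Xbar_stable (r η lam mu f : ℝ) (hη : η * f < r) (hsum : 0 < lam + mu)
    (hD : lam * (r - η * f) + mu * (r - f) < 0) :
    Xbar r η lam mu f =
      (((lam / mu) * ((r - η * f) * (η * f - f)) / (lam * (r - η * f) + mu * (r - f)) : ℝ) : EReal) := by
  rw [Xbar, if_neg (not_le.mpr hη), if_pos]
  rw [lt_div_iff₀ hsum]; nlinarith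

lemma Xbar_unstable (r η lam mu f : ℝ) (hη : η * f < r) (hsum : 0 < lam + mu)
    (hD : 0 ≤ lam * (r - η * f) + mu * (r - f)) :
    Xbar r η lam mu f = ⊤ := by
  rw [Xbar, if_neg (not_le.mpr hη), if_neg]
  rw [not_lt, div_le_iff₀ hsum]; nlinarith

/-- The real inequality underlying part 1 of Theorem 2. -/
lemma part1_real (c₀ c₁ a b K μ l L : ℝ) (hc₀ : 0 < c₀) (hc₁ : 0 < c₁) (ha : 0 < a) (hb : b < 0)
    (hK : K < 0) (hμ : 0 < μ) (hl : 0 ≤ l) (hlL : l ≤ L)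
    (hD : L * a + μ * b < 0) (hc1 : c₁ ≤ c₀ * K / (μ * (L * a + μ * b))) :
    c₀ * ((l / μ) * K / (l * a + μ * b)) - c₁ * l
      ≤ c₀ * ((L / μ) * K / (L * a + μ * b)) - c₁ * L := by
  have hDl : l * a + μ * b < 0 := by nlinarith
  have hμD : μ * (L * a + μ * b) < 0 := by nlinarith
  have e1 : c₀ * ((L / μ) * K / (L * a + μ * b)) - c₀ * ((l / μ) * K / (l * a + μ * b))
      = c₀ * K * b * (L - l) / ((L * a + μ * b) * (l * a + μ * b)) := by
    field_simp [hμ.ne', hD.ne, hDl.ne, (by rw [mul_comm a l]; exact hDl.ne : a * l + μ * b ≠ 0)]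
    ring
  have h1 : c₀ * K ≤ c₁ * (μ * (L * a + μ * b)) := by
    rwa [le_div_iff_of_neg hμD] at hc1
  have hA : c₁ * (μ * (L * a + μ * b)) * (b * (L - l)) ≤ c₀ * K * (b * (L - l)) :=
    mul_le_mul_of_nonpos_right h1 (by nlinarith)
  have hB : c₁ * ((L - l) * ((L * a + μ * b) * (l * a))) ≤ 0 := by
    have h0 : 0 ≤ c₁ * ((L - l) * (l * a)) :=
      mul_nonneg hc₁.le (mul_nonneg (sub_nonneg.mpr hlL) (mul_nonneg hl ha.le))
    nlinarith [mul_nonpos_of_nonneg_of_nonpos h0 hD.le]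
  have h2 : c₁ * (L - l) * ((L * a + μ * b) * (l * a + μ * b)) ≤ c₀ * K * b * (L - l) := by
    nlinarith [hA, hB]
  have h3 : c₁ * (L - l) ≤ c₀ * K * b * (L - l) / ((L * a + μ * b) * (l * a + μ * b)) := by
    rw [le_div_iff₀ (by nlinarith)]
    linarith
  linarith

/-- The real inequality underlying part 2 of Theorem 2. -/
lemma part2_real (c₀ c₂' L K a b μ₀ mubar muhat : ℝ)
    (hc₀ : 0 < c₀) (hc₂' : 0 < c₂') (hL : 0 < L) (ha : 0 < a) (hb : b < 0) (hK : K < 0)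
    (hμ₀ : L * a + μ₀ * b = 0) (hμ₀hat : μ₀ < muhat)
    (hstat : deriv (fun m : ℝ => -(c₀ * ((L / m) * K / (L * a + m * b))) - c₂' * m) muhat = 0)
    (huniq : ∀ m : ℝ, μ₀ < m →
      deriv (fun m : ℝ => -(c₀ * ((L / m) * K / (L * a + m * b))) - c₂' * m) m = 0 → m = muhat)
    (hmu : mubar < muhat) :
    ∀ mu : ℝ, μ₀ < mu → mu ≤ mubar →
      -(c₀ * ((L / mu) * K / (L * a + mu * b))) - c₂' * mu
        ≤ -(c₀ * ((L / mubar) * K / (L * a + mubar * b))) - c₂' * mubar := by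
  set F : ℝ → ℝ := fun m => -(c₀ * ((L / m) * K / (L * a + m * b))) - c₂' * m with hF
  set φ : ℝ → ℝ := fun m => c₀ * L * K * (a * L + 2 * b * m) / (a * L * m + b * m ^ 2) ^ 2 - c₂'
    with hφ
  have hμ₀pos : 0 < μ₀ := by nlinarith
  have haL : a * L = -(μ₀ * b) := by linarith
  -- F in polynomial-denominator form
  have hFeq : F = fun m => -(c₀ * L * K / (a * L * m + b * m ^ 2)) - c₂' * m := by
    funext m
    show -(c₀ * ((L / m) * K / (L * a + m * b))) - c₂' * m = _
    rw [div_mul_eq_mul_div, div_div,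
      show m * (L * a + m * b) = a * L * m + b * m ^ 2 by ring, ← mul_div_assoc, ← mul_assoc]
  -- nonvanishing of denominator
  have hQne : ∀ m : ℝ, μ₀ < m → a * L * m + b * m ^ 2 ≠ 0 := by
    intro m hm
    have h1 : 0 < m := lt_trans hμ₀pos hm
    have h2 : L * a + m * b < 0 := by nlinarith
    rw [show a * L * m + b * m ^ 2 = m * (L * a + m * b) by ring]
    exact (mul_neg_of_pos_of_neg h1 h2).ne
  -- derivative of F
  have hderiv : ∀ m : ℝ, μ₀ < m → HasDerivAt F (φ m) m := by
    intro m hm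
    have hQ : a * L * m + b * m ^ 2 ≠ 0 := hQne m hm
    have hid : HasDerivAt (fun m : ℝ => a * L * m) (a * L) m := by
      simpa using (hasDerivAt_id m).const_mul (a * L)
    have hpw : HasDerivAt (fun m : ℝ => b * m ^ 2) (b * (2 * m)) m := by
      simpa using (hasDerivAt_pow 2 m).const_mul b
    have h1 : HasDerivAt (fun m : ℝ => a * L * m + b * m ^ 2) (a * L + b * (2 * m)) m :=
      hid.add hpw
    have h2 : HasDerivAt (fun m : ℝ => c₀ * L * K / (a * L * m + b * m ^ 2))
        ((0 * (a * L * m + b * m ^ 2) - c₀ * L * K * (a * L + b * (2 * m)))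
          / (a * L * m + b * m ^ 2) ^ 2) m :=
      (hasDerivAt_const m (c₀ * L * K)).div h1 hQ
    have h3 := (h2.neg).sub ((hasDerivAt_id m).const_mul c₂')
    have h4 : HasDerivAt (fun x : ℝ => -(c₀ * L * K / (a * L * x + b * x ^ 2)) - c₂' * x)
        (-((0 * (a * L * m + b * m ^ 2) - c₀ * L * K * (a * L + b * (2 * m)))
          / (a * L * m + b * m ^ 2) ^ 2) - c₂' * 1) m := by
      exact h3
    rw [hFeq]
    have e : φ m = -((0 * (a * L * m + b * m ^ 2) - c₀ * L * K * (a * L + b * (2 * m)))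
        / (a * L * m + b * m ^ 2) ^ 2) - c₂' * 1 := by
      rw [zero_mul, zero_sub, neg_div, neg_neg, mul_one, hφ]
      ring_nf
    rw [e]
    exact h4
  -- φ(muhat) = 0
  have hφhat : φ muhat = 0 := by
    rw [← (hderiv muhat hμ₀hat).deriv]; exact hstat
  -- φ > 0 on (μ₀, mubar]
  have hφpos : ∀ m : ℝ, μ₀ < m → m ≤ mubar → 0 < φ m := by
    by_contra hcon
    push_neg at hcon
    obtain ⟨m₀, hm₀1, hm₀2, hm₀3⟩ := hcon
    have hm₀ne : φ m₀ ≠ 0 := by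
      intro h0
      have := huniq m₀ hm₀1 (by rw [(hderiv m₀ hm₀1).deriv]; exact h0)
      exact absurd (this ▸ hm₀2) (not_le.mpr hmu)
    have hm₀neg : φ m₀ < 0 := lt_of_le_of_ne hm₀3 hm₀ne
    -- tendsto atTop near μ₀
    have htend : Filter.Tendsto φ (nhdsWithin μ₀ (Set.Ioi μ₀)) Filter.atTop := by
      have hnum : Filter.Tendsto (fun m => c₀ * L * K * (a * L + 2 * b * m))
          (nhdsWithin μ₀ (Set.Ioi μ₀)) (nhds (c₀ * L * K * (a * L + 2 * b * μ₀))) :=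
        ((Continuous.tendsto (by fun_prop) μ₀)).mono_left nhdsWithin_le_nhds
      have hnumpos : 0 < c₀ * L * K * (a * L + 2 * b * μ₀) := by
        rw [haL]
        nlinarith [mul_pos (mul_pos (mul_pos hc₀ hL) (mul_pos_of_neg_of_neg hK hb)) hμ₀pos]
      have hden : Filter.Tendsto (fun m : ℝ => ((a * L * m + b * m ^ 2) ^ 2)⁻¹)
          (nhdsWithin μ₀ (Set.Ioi μ₀)) Filter.atTop := by
        apply Filter.Tendsto.comp tendsto_inv_nhdsGT_zero
        apply tendsto_nhdsWithin_of_tendsto_nhds_of_eventually_within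
        · have hc : Continuous (fun m : ℝ => (a * L * m + b * m ^ 2) ^ 2) := by fun_prop
          have hz0 : a * L * μ₀ + b * μ₀ ^ 2 = 0 := by rw [haL]; ring
          have := (hc.tendsto μ₀).mono_left
            (nhdsWithin_le_nhds (s := Set.Ioi μ₀))
          simpa [hz0] using this
        · filter_upwards [self_mem_nhdsWithin] with m hm
          exact Set.mem_Ioi.mpr (pow_two_pos_of_ne_zero (hQne m hm))
      have h1 := hnum.pos_mul_atTop hnumpos hden
      have h2 := Filter.tendsto_atTop_add_const_right _ (-c₂') h1
      have heqφ : φ = fun m => c₀ * L * K * (a * L + 2 * b * m)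
          * (((a * L * m + b * m ^ 2) ^ 2)⁻¹) + -c₂' := by
        funext m; rw [hφ]; ring
      rw [heqφ]
      exact h2
    -- find point p in (μ₀, m₀) with φ p > 0
    have hIoo : ∀ᶠ x in nhdsWithin μ₀ (Set.Ioi μ₀), x ∈ Set.Ioo μ₀ m₀ :=
      Filter.eventually_of_mem (Ioo_mem_nhdsGT_of_mem ⟨le_refl μ₀, hm₀1⟩) (fun x hx => hx)
    obtain ⟨p, hp1, hp2⟩ := ((htend.eventually_gt_atTop 0).and hIoo).exists
    -- IVT on [p, m₀]
    have hcont : ContinuousOn φ (Set.Icc p m₀) := by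
      apply ContinuousOn.sub _ continuousOn_const
      apply ContinuousOn.div (Continuous.continuousOn (by fun_prop))
        (Continuous.continuousOn (by fun_prop))
      intro x hx
      exact pow_ne_zero 2 (hQne x (lt_of_lt_of_le hp2.1 hx.1))
    have h0mem : (0 : ℝ) ∈ Set.Icc (φ m₀) (φ p) := ⟨hm₀neg.le, hp1.le⟩
    obtain ⟨z, hz1, hz2⟩ := intermediate_value_Icc' hp2.2.le hcont h0mem
    have hzμ₀ : μ₀ < z := lt_of_lt_of_le hp2.1 hz1.1
    have hz3 := huniq z hzμ₀ (by rw [(hderiv z hzμ₀).deriv]; exact hz2)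
    have hzle : z ≤ mubar := le_trans hz1.2 hm₀2
    rw [hz3] at hzle
    linarith
  -- conclude by monotonicity
  intro mu hmu1 hmu2
  rcases eq_or_lt_of_le hmu2 with heq | hlt
  · rw [heq]
  · have hmono : StrictMonoOn F (Set.Icc mu mubar) := by
      apply strictMonoOn_of_deriv_pos (convex_Icc mu mubar)
      · rw [hFeq]
        apply ContinuousOn.sub _ (by fun_prop : Continuous fun m : ℝ => c₂' * m).continuousOn
        apply ContinuousOn.neg
        apply ContinuousOn.div continuousOn_const (Continuous.continuousOn (by fun_prop))
        intro x hx
        exact hQne x (lt_of_lt_of_le hmu1 hx.1)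
      · intro x hx
        rw [interior_Icc] at hx
        rw [(hderiv x (lt_trans hmu1 hx.1)).deriv]
        exact hφpos x (lt_trans hmu1 hx.1) hx.2.le
    exact (hmono (Set.left_mem_Icc.mpr hmu2) (Set.right_mem_Icc.mpr hmu2) hlt).le

/-- Theorem 2 (exhaustive recovery resource): under conditions (2.3a)–(2.3c),
(λ̄, μ̄) is a Nash equilibrium. -/
theorem stmt_17 (c₀ c₁ c₂' r η f₀ f₀' lambar mubar muhat : ℝ)
    (hc₀ : 0 < c₀) (hc₁ : 0 < c₁) (hc₂' : 0 < c₂')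
    (hη : 0 < η) (hη1 : η < 1) (hf₀' : f₀' = η * f₀)
    (hlambar : 0 < lambar) (hmubar : 0 < mubar)
    (hr1 : f₀' < r) (hr2 : r < f₀)
    -- condition (2.3a)
    (hstab : lambar < mubar * (r - f₀) / (-(r - f₀')))
    -- μ̂ is the unique stationary point of μ ↦ u₂'(λ̄, μ) on the stable region
    (hmuhat : lambar * (r - f₀') / (f₀ - r) < muhat)
    (hstat : deriv (fun m : ℝ =>
        -(c₀ * ((lambar / m) * ((r - f₀') * (f₀' - f₀))
            / (lambar * (r - f₀') + m * (r - f₀)))) - c₂' * m) muhat = 0)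
    (huniq : ∀ m : ℝ, lambar * (r - f₀') / (f₀ - r) < m →
      deriv (fun m : ℝ =>
        -(c₀ * ((lambar / m) * ((r - f₀') * (f₀' - f₀))
            / (lambar * (r - f₀') + m * (r - f₀)))) - c₂' * m) m = 0 → m = muhat)
    -- condition (2.3b)
    (hmu : mubar < muhat)
    -- condition (2.3c)
    (hc1le : c₁ ≤ c₀ * ((r - f₀') * (f₀' - f₀))
        / (mubar * (lambar * (r - f₀') + mubar * (r - f₀)))) :
    (∀ lam ∈ Set.Icc (0:ℝ) lambar,
        u1' c₀ c₁ r η f₀ lam mubar ≤ u1' c₀ c₁ r η f₀ lambar mubar) ∧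
    (∀ mu ∈ Set.Icc (0:ℝ) mubar,
        u2' c₀ c₂' r η f₀ lambar mu ≤ u2' c₀ c₂' r η f₀ lambar mubar) := by
  subst hf₀'
  have ha : 0 < r - η * f₀ := sub_pos.mpr hr1
  have hb : r - f₀ < 0 := sub_neg.mpr hr2
  have hK : (r - η * f₀) * (η * f₀ - f₀) < 0 :=
    mul_neg_of_pos_of_neg ha (by linarith)
  -- condition (2.3a) reformulated
  have hDbar : lambar * (r - η * f₀) + mubar * (r - f₀) < 0 := by
    rw [lt_div_iff_of_neg (by linarith : -(r - η * f₀) < 0)] at hstab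
    nlinarith
  constructor
  · -- part 1
    rintro lam ⟨hlam0, hlamle⟩
    rw [u1', u1',
      Xbar_stable r η lam mubar f₀ hr1 (by linarith) (by nlinarith),
      Xbar_stable r η lambar mubar f₀ hr1 (by linarith) hDbar,
      ← EReal.coe_mul, ← EReal.coe_mul, ← EReal.coe_sub, ← EReal.coe_sub,
      EReal.coe_le_coe_iff]
    exact part1_real c₀ c₁ (r - η * f₀) (r - f₀) ((r - η * f₀) * (η * f₀ - f₀)) mubar lam lambar
      hc₀ hc₁ ha hb hK hmubar hlam0 hlamle hDbar hc1le
  · -- part 2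
    rintro mu ⟨hmu0, hmule⟩
    set μ₀ : ℝ := lambar * (r - η * f₀) / (f₀ - r) with hμ₀def
    have hfr : 0 < f₀ - r := by linarith
    have hμ₀eq : lambar * (r - η * f₀) + μ₀ * (r - f₀) = 0 := by
      rw [hμ₀def]
      field_simp
      ring
    have hμ₀pos : 0 < μ₀ := div_pos (mul_pos hlambar ha) hfr
    rcases lt_or_ge μ₀ mu with hgt | hle
    · -- stable region
      have hDmu : lambar * (r - η * f₀) + mu * (r - f₀) < 0 := by
        nlinarith [mul_neg_of_pos_of_neg (sub_pos.mpr hgt) hb]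
      rw [u2', u2',
        Xbar_stable r η lambar mu f₀ hr1 (by linarith) hDmu,
        Xbar_stable r η lambar mubar f₀ hr1 (by linarith) hDbar,
        ← EReal.coe_mul, ← EReal.coe_mul, ← EReal.coe_neg, ← EReal.coe_neg,
        ← EReal.coe_sub, ← EReal.coe_sub, EReal.coe_le_coe_iff]
      exact part2_real c₀ c₂' lambar ((r - η * f₀) * (η * f₀ - f₀)) (r - η * f₀) (r - f₀) μ₀
        mubar muhat hc₀ hc₂' hlambar ha hb hK hμ₀eq hmuhat hstat huniq hmu mu hgt hmule
    · -- unstable region: utility is ⊥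
      have hDmu : 0 ≤ lambar * (r - η * f₀) + mu * (r - f₀) := by
        nlinarith [mul_nonneg (sub_nonneg.mpr hle) (neg_nonneg.mpr hb.le)]
      rw [u2', Xbar_unstable r η lambar mu f₀ hr1 (by linarith) hDmu,
        EReal.coe_mul_top_of_pos hc₀]
      rw [show -(⊤ : EReal) = ⊥ from rfl, EReal.bot_sub]
      exact bot_le
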